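/- arXiv:1712.02499 — 8 statements merged into one kernel-verified Lean document; each statement's English description precedes it below -/
import Mathlib

section
/- Fix j, k, m, n ∈ ℕ with j ≤ k and m + n - k ≤ j. If m = j + k - n, then ∑_{i=0}^{j} (C(j,i) C(k,i) / C(n,i)) (-1)^i i^m = (-1)^{n-j-k} · j! · k! / n!, and if m < j + k - n then this sum equals 0. -/
open Finset Polynomial fwdDiff

private lemma myFwdDiff_eval (p : ℝ[X]) :
    fwdDiff (1:ℝ) (fun x : ℝ ↦ p.eval x) = fun x ↦ (p.comp (X + 1) - p).eval x := by
  funext x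
  simp [fwdDiff, eval_comp]

private lemma myFwdDiff_iter_zero (j : ℕ) :
    (fwdDiff (1:ℝ))^[j] (fun _ : ℝ ↦ (0:ℝ)) = fun _ ↦ 0 := by
  induction j with
  | zero => rfl
  | succ j ih => rw [Function.iterate_succ_apply]; simpa [fwdDiff] using ih

private lemma myCoeff_comp (p : ℝ[X]) (e : ℕ) :
    (p.comp (X + 1)).coeff e
      = ∑ i ∈ range (p.natDegree + 1), p.coeff i * (i.choose e : ℝ) := by
  rw [Polynomial.comp, eval₂_eq_sum_range]
  rw [finset_sum_coeff]
  congr 1; funext i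
  simp [coeff_C_mul, coeff_X_add_one_pow]

private lemma myKey (j : ℕ) :
    ∀ p : ℝ[X],
      (p.natDegree < j → (fwdDiff (1:ℝ))^[j] (fun x ↦ p.eval x) = fun _ ↦ 0) ∧
      (p.natDegree = j → (fwdDiff (1:ℝ))^[j] (fun x ↦ p.eval x)
          = fun _ ↦ (j.factorial : ℝ) * p.leadingCoeff) := by
  induction j with
  | zero =>
    intro p
    refine ⟨fun h ↦ absurd h (by omega), fun h ↦ ?_⟩
    funext x
    simp only [Function.iterate_zero, id_eq, Nat.factorial_zero, Nat.cast_one, one_mul]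
    conv_lhs => rw [Polynomial.eq_C_of_natDegree_eq_zero h]
    simp [Polynomial.leadingCoeff, h]
  | succ j ih =>
    intro p
    by_cases h0 : p.natDegree = 0
    · have hq : p.comp (X + 1) - p = 0 := by
        conv_lhs => rw [Polynomial.eq_C_of_natDegree_eq_zero h0]
        simp
      refine ⟨fun _ ↦ ?_, fun h ↦ absurd h (by omega)⟩
      rw [Function.iterate_succ_apply, myFwdDiff_eval, hq]
      simpa using myFwdDiff_iter_zero j
    · have hp0 : p ≠ 0 := fun h ↦ h0 (by simp [h])
      have hlcp : p.leadingCoeff ≠ 0 := leadingCoeff_ne_zero.mpr hp0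
      have h1 : (X + 1 : ℝ[X]).natDegree = 1 := by
        simpa using Polynomial.natDegree_X_add_C (1:ℝ)
      have hcn : (p.comp (X + 1)).natDegree = p.natDegree := by
        rw [natDegree_comp, h1, mul_one]
      have hlc : (p.comp (X + 1)).leadingCoeff = p.leadingCoeff := by
        rw [leadingCoeff_comp (by rw [h1]; omega)]
        simpa using by rw [show (X + 1 : ℝ[X]) = X + C 1 by simp,
          (monic_X_add_C (1:ℝ)).leadingCoeff, one_pow, mul_one]
      have hc0 : p.comp (X + 1) ≠ 0 := by
        intro h
        rw [h] at hlc
        exact hlcp (by simpa using hlc.symm)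
      have hdeg : (p.comp (X + 1) - p).degree < p.degree := by
        have hde : (p.comp (X + 1)).degree = p.degree := by
          rw [degree_eq_natDegree hc0, degree_eq_natDegree hp0, hcn]
        simpa [hde] using degree_sub_lt hde hc0 hlc
      have hnq : (p.comp (X + 1) - p).natDegree < p.natDegree := by
        by_cases hq0 : p.comp (X + 1) - p = 0
        · rw [hq0]; simpa using Nat.pos_of_ne_zero h0
        · exact natDegree_lt_natDegree hq0 hdeg
      constructor
      · intro h
        rw [Function.iterate_succ_apply, myFwdDiff_eval]
        exact (ih _).1 (by omega)
      · intro h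
        have hco : (p.comp (X + 1) - p).coeff j = ((j:ℝ) + 1) * p.leadingCoeff := by
          rw [coeff_sub, myCoeff_comp, h, Finset.sum_range_succ, Finset.sum_range_succ,
            Finset.sum_eq_zero (fun i hi ↦ by
              rw [Nat.choose_eq_zero_of_lt (Finset.mem_range.mp hi), Nat.cast_zero, mul_zero])]
          rw [Polynomial.leadingCoeff, h]
          simp [Nat.choose_succ_self_right]
          ring
        have hqd : (p.comp (X + 1) - p).natDegree = j := by
          have hge : j ≤ (p.comp (X + 1) - p).natDegree :=
            le_natDegree_of_ne_zero (by
              rw [hco]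
              exact mul_ne_zero (by positivity) hlcp)
          omega
        rw [Function.iterate_succ_apply, myFwdDiff_eval, (ih _).2 hqd]
        funext x
        rw [Polynomial.leadingCoeff, hqd, hco, Nat.factorial_succ]
        push_cast
        ring

private lemma mySum_eq (j : ℕ) (f : ℝ → ℝ) :
    ∑ i ∈ range (j + 1), (-1:ℝ) ^ i * (j.choose i) * f i
      = (-1:ℝ) ^ j * (fwdDiff (1:ℝ))^[j] f 0 := by
  rw [fwdDiff_iter_eq_sum_shift (1:ℝ) f j 0, Finset.mul_sum]
  refine Finset.sum_congr rfl fun i hi ↦ ?_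
  have hij : i ≤ j := by have := Finset.mem_range.mp hi; omega
  have hconv : (0:ℝ) + i • (1:ℝ) = i := by simp
  rw [hconv, zsmul_eq_mul]
  push_cast
  have hpow : (-1:ℝ) ^ j * (-1:ℝ) ^ (j - i) = (-1:ℝ) ^ i := by
    rw [← pow_add, show j + (j - i) = 2 * (j - i) + i by omega, pow_add, pow_mul,
      neg_one_sq, one_pow, one_mul]
  linear_combination (-(j.choose i : ℝ) * f i) * hpow

private lemma myFactProd (a d : ℕ) :
    (a + d).factorial = a.factorial * ∏ r ∈ range d, (a + d - r) := by
  induction d with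
  | zero => simp
  | succ d ih =>
    rw [Finset.prod_range_succ']
    have h1 : ∀ r, a + (d + 1) - (r + 1) = a + d - r := by omega
    simp only [h1, Nat.sub_zero]
    rw [show a + (d + 1) = (a + d) + 1 by omega, Nat.factorial_succ, ih]
    ring

private lemma myRatio (i k n : ℕ) (hik : i ≤ k) (hkn : k ≤ n) :
    (k.choose i : ℝ) / (n.choose i)
      = ((k.factorial : ℝ) / n.factorial) * ∏ r ∈ range (n - k), ((n:ℝ) - i - r) := by
  have hQ : ((n - i).factorial : ℝ)
      = ((k - i).factorial : ℝ) * ∏ r ∈ range (n - k), ((n:ℝ) - i - r) := by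
    have h := myFactProd (k - i) (n - k)
    rw [show k - i + (n - k) = n - i by omega] at h
    rw [h]
    push_cast [Finset.prod_natCast]
    congr 1
    refine Finset.prod_congr rfl fun r hr ↦ ?_
    have hr' := Finset.mem_range.mp hr
    rw [show n - i - r = n - (i + r) by omega, Nat.cast_sub (by omega)]
    push_cast
    ring
  have hfne : ∀ a : ℕ, (a.factorial : ℝ) ≠ 0 := fun a ↦
    Nat.cast_ne_zero.mpr (Nat.factorial_ne_zero a)
  rw [Nat.cast_choose ℝ hik, Nat.cast_choose ℝ (hik.trans hkn), hQ]
  field_simp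

open Finset in
open Polynomial in
/-- Interpolation identity for the combinatorial sums appearing in the
series expansion of the multiplicative convolution. -/
theorem stmt_1 (j k m n : ℕ) (hjk : j ≤ k) (hkn : k ≤ n) (hm : m + n ≤ j + k) :
    (m + n = j + k →
      ∑ i ∈ range (j + 1),
        ((j.choose i : ℝ) * (k.choose i) / (n.choose i)) * (-1) ^ i * (i : ℝ) ^ m
        = (-1) ^ (j + k - n) * (j.factorial : ℝ) * (k.factorial) / (n.factorial)) ∧
    (m + n < j + k →
      ∑ i ∈ range (j + 1),
        ((j.choose i : ℝ) * (k.choose i) / (n.choose i)) * (-1) ^ i * (i : ℝ) ^ m = 0) := by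
  set d := n - k with hd
  set P : ℝ[X] := X ^ m * ∏ r ∈ range d, (C ((n:ℝ) - r) - X) with hP
  have hfac : ∀ r : ℕ, (C ((n:ℝ) - r) - X) = -(X - C ((n:ℝ) - r)) := fun r ↦ by ring
  have hfne : ∀ r ∈ range d, (C ((n:ℝ) - r) - X) ≠ 0 := fun r _ ↦ by
    rw [hfac]
    exact neg_ne_zero.mpr (X_sub_C_ne_zero _)
  have hfdeg : ∀ r : ℕ, (C ((n:ℝ) - r) - X).natDegree = 1 := fun r ↦ by
    rw [hfac, natDegree_neg, natDegree_X_sub_C]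
  have hflc : ∀ r : ℕ, (C ((n:ℝ) - r) - X).leadingCoeff = -1 := fun r ↦ by
    rw [hfac, leadingCoeff_neg, (monic_X_sub_C _).leadingCoeff]
  have hprodne : (∏ r ∈ range d, (C ((n:ℝ) - r) - X)) ≠ 0 :=
    Finset.prod_ne_zero_iff.mpr hfne
  have hPdeg : P.natDegree = m + d := by
    rw [hP, natDegree_mul (pow_ne_zero _ X_ne_zero) hprodne, natDegree_X_pow,
      natDegree_prod _ _ hfne]
    rw [Finset.sum_congr rfl fun r _ ↦ hfdeg r]
    simp
  have hPlc : P.leadingCoeff = (-1:ℝ) ^ d := by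
    rw [hP, leadingCoeff_mul, leadingCoeff_X_pow, one_mul, leadingCoeff_prod,
      Finset.prod_congr rfl fun r _ ↦ hflc r, Finset.prod_const, Finset.card_range]
  have hPeval : ∀ i : ℕ, P.eval (i:ℝ) = (i:ℝ) ^ m * ∏ r ∈ range d, ((n:ℝ) - i - r) := by
    intro i
    rw [hP]
    simp only [eval_mul, eval_pow, eval_X, eval_prod, eval_sub, eval_C]
    exact congrArg _ (Finset.prod_congr rfl fun r _ ↦ by ring)
  have hterm : ∀ i ∈ range (j + 1),
      ((j.choose i : ℝ) * (k.choose i) / (n.choose i)) * (-1) ^ i * (i : ℝ) ^ m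
        = ((k.factorial : ℝ) / n.factorial)
            * ((-1:ℝ) ^ i * (j.choose i) * P.eval (i:ℝ)) := by
    intro i hi
    have hik : i ≤ k := by have := Finset.mem_range.mp hi; omega
    have h1 : ((j.choose i : ℝ) * (k.choose i) / (n.choose i)) * (-1) ^ i * (i : ℝ) ^ m
        = (j.choose i : ℝ) * ((k.choose i : ℝ) / (n.choose i)) * (-1) ^ i * (i : ℝ) ^ m := by
      ring
    rw [h1, myRatio i k n hik hkn, hPeval]
    ring
  have hS : ∑ i ∈ range (j + 1),
      ((j.choose i : ℝ) * (k.choose i) / (n.choose i)) * (-1) ^ i * (i : ℝ) ^ m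
        = ((k.factorial : ℝ) / n.factorial)
            * ((-1:ℝ) ^ j * (fwdDiff (1:ℝ))^[j] (fun x ↦ P.eval x) 0) := by
    rw [Finset.sum_congr rfl hterm, ← Finset.mul_sum, mySum_eq j (fun x ↦ P.eval x)]
  constructor
  · intro hcase
    have hdj : m + d = j := by omega
    have hdd : d ≤ j := by omega
    have h2 := congrFun ((myKey j P).2 (by rw [hPdeg]; omega)) 0
    rw [hS, h2, hPlc]
    have hjkn : j + k - n = j - d := by omega
    have hpow : (-1:ℝ) ^ j * (-1:ℝ) ^ d = (-1:ℝ) ^ (j - d) := by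
      rw [← pow_add, show j + d = 2 * d + (j - d) by omega, pow_add, pow_mul,
        neg_one_sq, one_pow, one_mul]
    rw [hjkn]
    have hfne : (n.factorial : ℝ) ≠ 0 := Nat.cast_ne_zero.mpr (Nat.factorial_ne_zero n)
    field_simp
    linear_combination hpow
  · intro hcase
    have h2 := congrFun ((myKey j P).1 (by rw [hPdeg]; omega)) 0
    rw [hS, h2]
    simp
end

section
/- For any polynomial p ∈ ℂ[x] of degree at most j (with j ∈ ℕ) and q ∈ ℂ not a root of unity with q ≠ 0, the coefficient of t^j in p satisfies: (-1)^j q^{-binom(j,2)} · [t^j]p(t) = ∑_{i=0}^{j} p((i)_{q^{-1}}) · (-1)^i q^{binom(i,2)} / ((i)_q! · (j-i)_q!), where (i)_q := (1-q^i)/(1-q) and (i)_q! := ∏_{m=1}^{i} (m)_q. -/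
open Finset

/-- The `q`-integer `(i)_q = (1 - q^i)/(1 - q)`. -/
noncomputable def qint (q : ℂ) (i : ℕ) : ℂ := (1 - q ^ i) / (1 - q)

/-- The `q`-factorial `(i)_q! = (1)_q (2)_q ⋯ (i)_q`. -/
noncomputable def qfact (q : ℂ) (i : ℕ) : ℂ := ∏ m ∈ Icc 1 i, qint q m

lemma choose2_succ (n : ℕ) : (n + 1).choose 2 = n.choose 2 + n := by
  rw [Nat.choose_two_right, Nat.choose_two_right, Nat.triangle_succ]

lemma sum_range_id_choose (n : ℕ) : ∑ k ∈ range n, k = n.choose 2 := by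
  rw [Finset.sum_range_id, Nat.choose_two_right]

lemma choose_split {i j : ℕ} (h : i ≤ j) :
    i.choose 2 + (j - i).choose 2 + i * (j - i) = j.choose 2 := by
  obtain ⟨d, rfl⟩ := Nat.exists_eq_add_of_le h
  simp only [Nat.add_sub_cancel_left]
  induction d with
  | zero => simp
  | succ d ih =>
    have h1 := choose2_succ d
    have h3 : i + (d + 1) = (i + d) + 1 := by omega
    rw [h3, choose2_succ (i + d), h1]
    have h4 : i * (d + 1) = i * d + i := by ring
    omega

lemma qfact_eq_prod_range (q : ℂ) (n : ℕ) :
    qfact q n = ∏ k ∈ range n, qint q (k + 1) := by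
  rw [qfact, ← Finset.Ico_add_one_right_eq_Icc, Finset.prod_Ico_eq_prod_range]
  exact Finset.prod_congr rfl fun k _ => by rw [Nat.add_comm]

lemma qfact_succ (q : ℂ) (n : ℕ) : qfact q (n + 1) = qfact q n * qint q (n + 1) := by
  rw [qfact, qfact, Finset.prod_Icc_succ_top (Nat.le_add_left 1 n)]

lemma qint_diff (q : ℂ) {k i : ℕ} (hk : k ≤ i) :
    qint q i - qint q k = q ^ k * qint q (i - k) := by
  have h : q ^ k * q ^ (i - k) = q ^ i := by rw [← pow_add, Nat.add_sub_cancel' hk]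
  unfold qint
  rw [← h]; ring

lemma qint_inv (q : ℂ) (hq0 : q ≠ 0) (h1 : (1:ℂ) - q ≠ 0) (h1i : (1:ℂ) - q⁻¹ ≠ 0) (n : ℕ) :
    qint q⁻¹ (n + 1) = (q ^ n)⁻¹ * qint q (n + 1) := by
  rw [qint, qint, inv_pow, inv_mul_eq_div, div_div,
    div_eq_div_iff h1i (mul_ne_zero h1 (pow_ne_zero _ hq0))]
  field_simp
  ring

lemma qfact_inv (q : ℂ) (hq0 : q ≠ 0) (h1 : (1:ℂ) - q ≠ 0) (h1i : (1:ℂ) - q⁻¹ ≠ 0) (n : ℕ) :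
    qfact q⁻¹ n = (q ^ n.choose 2)⁻¹ * qfact q n := by
  induction n with
  | zero => simp [qfact]
  | succ n ih =>
    rw [qfact_succ, qfact_succ, ih, qint_inv q hq0 h1 h1i n, choose2_succ, pow_add, mul_inv]
    ring

/-- q-Lagrange interpolation: the top coefficient of a polynomial of degree at
most `j` can be recovered from its values at the points `(i)_{q⁻¹}`. -/
theorem stmt_2 (j : ℕ) (q : ℂ) (hq0 : q ≠ 0) (hq : ∀ n : ℕ, 0 < n → q ^ n ≠ 1)
    (p : Polynomial ℂ) (hp : p.natDegree ≤ j) :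
    (-1) ^ j * (q ^ j.choose 2)⁻¹ * p.coeff j =
      ∑ i ∈ range (j + 1),
        p.eval (qint q⁻¹ i) * (-1) ^ i * q ^ i.choose 2 / (qfact q i * qfact q (j - i)) := by
  classical
  set v : ℕ → ℂ := fun i => qint q⁻¹ i with hv
  have h1 : (1:ℂ) - q ≠ 0 := by
    intro h
    exact hq 1 one_pos (by simpa using (by linear_combination -h : q = 1))
  have hqinv : ∀ n : ℕ, 0 < n → (q⁻¹) ^ n ≠ 1 := by
    intro n hn h
    apply hq n hn
    rw [inv_pow] at h
    have := congrArg (· * q ^ n) h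
    simpa [inv_mul_cancel₀ (pow_ne_zero n hq0)] using this.symm
  have h1i : (1:ℂ) - q⁻¹ ≠ 0 := by
    intro h
    exact hqinv 1 one_pos (by simpa using (by linear_combination -h : q⁻¹ = 1))
  have hqint_ne : ∀ n : ℕ, 0 < n → qint q⁻¹ n ≠ 0 := by
    intro n hn h
    rw [qint, div_eq_zero_iff] at h
    rcases h with h | h
    · exact hqinv n hn (by linear_combination -h)
    · exact h1i h
  have hvinj : Function.Injective v := by
    have key : ∀ a b : ℕ, a < b → v a ≠ v b := by
      intro a b hab h
      have h' : qint q⁻¹ a = qint q⁻¹ b := h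
      have h2 : qint q⁻¹ b - qint q⁻¹ a = 0 := by rw [h', sub_self]
      rw [qint_diff q⁻¹ hab.le] at h2
      rcases mul_eq_zero.mp h2 with h2 | h2
      · exact pow_ne_zero a (inv_ne_zero hq0) h2
      · exact hqint_ne (b - a) (by omega) h2
    intro a b h
    rcases lt_trichotomy a b with hab | hab | hab
    · exact absurd h (key a b hab)
    · exact hab
    · exact absurd h.symm (key b a hab)
  have hvs : Set.InjOn v (range (j + 1)) := Function.Injective.injOn hvinj
  have hdeg : p.degree < (range (j + 1)).card := by
    rw [card_range]
    calc p.degree ≤ p.natDegree := Polynomial.degree_le_natDegree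
    _ < (j + 1 : ℕ) := by exact_mod_cast Nat.lt_succ_of_le hp
  set W : ℕ → ℂ := fun i => ∏ k ∈ (range (j + 1)).erase i, (v i - v k) with hW
  have hWval : ∀ i ∈ range (j + 1),
      W i = (-1) ^ (j - i) * (q ^ (j.choose 2 + i.choose 2))⁻¹ *
        (qfact q i * qfact q (j - i)) := by
    intro i hi
    rw [mem_range] at hi
    have hij : i ≤ j := by omega
    have hsplit : (range (j + 1)).erase i = range i ∪ Ico (i + 1) (j + 1) := by
      ext k
      simp only [Finset.mem_erase, Finset.mem_range, Finset.mem_union, Finset.mem_Ico]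
      omega
    have hdisj : Disjoint (range i) (Ico (i + 1) (j + 1)) := by
      rw [Finset.disjoint_left]
      intro k hk hk'
      simp only [mem_range] at hk
      simp only [mem_Ico] at hk'
      omega
    have hP1 : ∏ k ∈ range i, (v i - v k) = (q ^ i.choose 2)⁻¹ * qfact q⁻¹ i := by
      have step : ∀ k ∈ range i, v i - v k = ((q⁻¹) ^ k) * qint q⁻¹ (i - k) := by
        intro k hk
        exact qint_diff q⁻¹ (mem_range.mp hk).le
      rw [Finset.prod_congr rfl step, Finset.prod_mul_distrib]
      congr 1
      · rw [Finset.prod_pow_eq_pow_sum, sum_range_id_choose, inv_pow]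
      · rw [qfact_eq_prod_range, ← Finset.prod_range_reflect]
        refine Finset.prod_congr rfl fun k hk => ?_
        rw [mem_range] at hk
        congr 1
        omega
    have hP2 : ∏ k ∈ Ico (i + 1) (j + 1), (v i - v k) =
        (-1) ^ (j - i) * ((q ^ (i * (j - i)))⁻¹ * qfact q⁻¹ (j - i)) := by
      have step : ∀ k ∈ Ico (i + 1) (j + 1),
          v i - v k = (-1) * (((q⁻¹) ^ i) * qint q⁻¹ (k - i)) := by
        intro k hk
        rw [mem_Ico] at hk
        have : v k - v i = ((q⁻¹) ^ i) * qint q⁻¹ (k - i) := qint_diff q⁻¹ (by omega)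
        linear_combination -this
      rw [Finset.prod_congr rfl step, Finset.prod_mul_distrib, Finset.prod_mul_distrib]
      rw [Finset.prod_const, Finset.prod_const, Nat.card_Ico]
      have hcard : j + 1 - (i + 1) = j - i := by omega
      rw [hcard]
      congr 1
      congr 1
      · rw [← pow_mul, inv_pow]
      · rw [qfact_eq_prod_range, Finset.prod_Ico_eq_prod_range, hcard]
        refine Finset.prod_congr rfl fun k hk => ?_
        congr 1
        omega
    rw [hW]
    simp only
    rw [hsplit, Finset.prod_union hdisj, hP1, hP2,
      qfact_inv q hq0 h1 h1i, qfact_inv q hq0 h1 h1i]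
    have hexp : i.choose 2 + (i.choose 2 + (i * (j - i) + (j - i).choose 2)) =
        j.choose 2 + i.choose 2 := by
      have := choose_split hij
      omega
    rw [← hexp]
    simp only [pow_add, mul_inv]
    ring
  have hcoeff : p.coeff j = ∑ i ∈ range (j + 1), p.eval (v i) * (W i)⁻¹ := by
    conv_lhs => rw [Lagrange.eq_interpolate hvs hdeg]
    rw [Lagrange.interpolate_apply, Polynomial.finset_sum_coeff]
    refine Finset.sum_congr rfl fun i hi => ?_
    rw [Polynomial.coeff_C_mul]
    congr 1
    have hnd : (Lagrange.basis (range (j + 1)) v i).natDegree = j := by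
      rw [Lagrange.natDegree_basis hvs hi, card_range]
      omega
    have hcb : (Lagrange.basis (range (j + 1)) v i).coeff j =
        (Lagrange.basis (range (j + 1)) v i).leadingCoeff := by
      rw [Polynomial.leadingCoeff, hnd]
    rw [hcb, Lagrange.basis, Polynomial.leadingCoeff_prod, hW]
    simp only
    rw [← Finset.prod_inv_distrib]
    refine Finset.prod_congr rfl fun k hk => ?_
    have hne : v i ≠ v k := by
      have := (Finset.mem_erase.mp hk).1
      exact fun h => this (hvinj h).symm
    rw [Lagrange.basisDivisor, Polynomial.leadingCoeff_mul, Polynomial.leadingCoeff_C,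
      (Polynomial.monic_X_sub_C (v k)).leadingCoeff, mul_one]
  rw [hcoeff, Finset.mul_sum]
  refine Finset.sum_congr rfl fun i hi => ?_
  rw [mem_range] at hi
  have hij : i ≤ j := by omega
  rw [hWval i (mem_range.mpr hi), mul_inv, mul_inv, inv_inv]
  have hsgn : ((-1 : ℂ) ^ (j - i))⁻¹ = (-1) ^ j * (-1) ^ i := by
    have hpm : ((-1 : ℂ)) ^ (j - i) * (-1) ^ i = (-1) ^ j := by
      rw [← pow_add, Nat.sub_add_cancel hij]
    have h2 : ((-1 : ℂ) ^ (j - i))⁻¹ = (-1) ^ (j - i) := by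
      rw [← inv_pow, inv_neg, inv_one]
    have h3 : ((-1 : ℂ)) ^ i * (-1) ^ i = 1 := by
      rw [← pow_add, ← two_mul, pow_mul]; norm_num
    calc ((-1 : ℂ) ^ (j - i))⁻¹ = (-1) ^ (j - i) * ((-1) ^ i * (-1) ^ i) := by
          rw [h2, h3, mul_one]
    _ = ((-1) ^ (j - i) * (-1) ^ i) * (-1) ^ i := by ring
    _ = (-1) ^ j * (-1) ^ i := by rw [hpm]
  have hqq : (q ^ j.choose 2)⁻¹ * q ^ (j.choose 2 + i.choose 2) = q ^ i.choose 2 := by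
    rw [pow_add, ← mul_assoc, inv_mul_cancel₀ (pow_ne_zero _ hq0), one_mul]
  have hji : ((-1:ℂ)) ^ j * (-1) ^ j = 1 := by
    rw [← pow_add, ← two_mul, pow_mul]; norm_num
  rw [div_eq_mul_inv]
  simp only [hv]
  calc (-1:ℂ) ^ j * (q ^ j.choose 2)⁻¹ *
        (p.eval (qint q⁻¹ i) * (((-1) ^ (j - i))⁻¹ * q ^ (j.choose 2 + i.choose 2) *
          (qfact q i * qfact q (j - i))⁻¹))
      = p.eval (qint q⁻¹ i) * ((-1) ^ j * (-1) ^ j) * (-1) ^ i *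
        ((q ^ j.choose 2)⁻¹ * q ^ (j.choose 2 + i.choose 2)) *
        (qfact q i * qfact q (j - i))⁻¹ := by rw [hsgn]; ring
    _ = p.eval (qint q⁻¹ i) * (-1) ^ i * q ^ i.choose 2 * (qfact q i * qfact q (j - i))⁻¹ := by
        rw [hji, hqq]; ring
end

section
/- Let b > 0, f ∈ ℝ[x] of degree at most n-1, and g ∈ ℝ[x] of degree at most n. Then f ⊞_b^n g = f ⊞_b^{n-1} (Δ_b g), where p ⊞_b^m r := ∑_{k=0}^{m} (Δ_b^k p)(x) · (Δ_b^{m-k} r)(0) and (Δ_b h)(x) = (h(x) - h(x-b))/b. -/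
open Polynomial Finset

/-- The backward finite difference operator `(Δ_b f)(x) = (f(x) - f(x-b))/b`. -/
noncomputable def deltab (b : ℝ) (f : Polynomial ℝ) : Polynomial ℝ :=
  Polynomial.C b⁻¹ * (f - f.comp (Polynomial.X - Polynomial.C b))

/-- The `b`-additive (finite difference) convolution
`p ⊞_b^m r = ∑_{k=0}^m (Δ_b^k p)(x) · (Δ_b^{m-k} r)(0)`. -/
noncomputable def bconv (b : ℝ) (m : ℕ) (p r : Polynomial ℝ) : Polynomial ℝ :=
  ∑ k ∈ range (m + 1),
    (deltab b)^[k] p * Polynomial.C (((deltab b)^[m - k] r).eval 0)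

lemma deltab_natDegree_le (b : ℝ) (f : Polynomial ℝ) (m : ℕ) (hf : f.natDegree ≤ m + 1) :
    (deltab b f).natDegree ≤ m := by
  rcases eq_or_ne f 0 with rfl | hf0
  · simp [deltab]
  have hq : (Polynomial.X - Polynomial.C b : Polynomial ℝ).natDegree = 1 :=
    Polynomial.natDegree_X_sub_C b
  have hdeg : (f.comp (Polynomial.X - Polynomial.C b)).degree = f.degree := by
    rw [Polynomial.degree_eq_natDegree hf0, Polynomial.degree_eq_natDegree]
    · congr 1
      rw [Polynomial.natDegree_comp, hq, mul_one]
    · intro h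
      apply hf0
      have := Polynomial.natDegree_comp (p := f) (q := Polynomial.X - Polynomial.C b)
      rw [h] at this
      simp [hq] at this
      -- f has natDegree 0 and comp = 0 means f = C c with c = 0
      have hc : f = Polynomial.C (f.coeff 0) := Polynomial.eq_C_of_natDegree_le_zero (by omega)
      rw [hc] at h ⊢
      simpa using h
  have hlc : (f.comp (Polynomial.X - Polynomial.C b)).leadingCoeff = f.leadingCoeff := by
    rw [Polynomial.leadingCoeff_comp (by rw [hq]; norm_num)]
    simp [Polynomial.leadingCoeff_X_sub_C]
  have hsub : (f - f.comp (Polynomial.X - Polynomial.C b)).degree < f.degree :=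
    Polynomial.degree_sub_lt hdeg.symm hf0 hlc.symm
  have h1 : (deltab b f).natDegree ≤ (f - f.comp (Polynomial.X - Polynomial.C b)).natDegree := by
    unfold deltab
    exact Polynomial.natDegree_mul_le.trans (by simp)
  rcases eq_or_ne (f - f.comp (Polynomial.X - Polynomial.C b)) 0 with h0 | h0
  · rw [h0] at h1; simpa using h1.trans (Nat.zero_le m)
  · have := Polynomial.natDegree_lt_natDegree h0 hsub
    omega

lemma iterate_deltab_eq_zero (b : ℝ) : ∀ (m : ℕ) (f : Polynomial ℝ),
    f.natDegree ≤ m → (deltab b)^[m + 1] f = 0 := by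
  intro m
  induction m with
  | zero =>
    intro f hf
    have hc : f = Polynomial.C (f.coeff 0) := Polynomial.eq_C_of_natDegree_le_zero hf
    rw [zero_add, Function.iterate_one, hc]
    simp [deltab]
  | succ m ih =>
    intro f hf
    rw [Function.iterate_succ_apply]
    exact ih (deltab b f) (deltab_natDegree_le b f m hf)

/-- Recursive identity: `f ⊞_b^n g = f ⊞_b^{n-1} (Δ_b g)` when `deg f ≤ n-1`. -/
theorem stmt_6 (b : ℝ) (hb : 0 < b) (n : ℕ) (hn : 1 ≤ n) (f g : Polynomial ℝ)
    (hf : f.natDegree ≤ n - 1) (hg : g.natDegree ≤ n) :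
    bconv b n f g = bconv b (n - 1) f (deltab b g) := by
  obtain ⟨m, rfl⟩ : ∃ m, n = m + 1 := ⟨n - 1, by omega⟩
  simp only [Nat.add_sub_cancel] at hf ⊢
  unfold bconv
  rw [sum_range_succ, iterate_deltab_eq_zero b m f hf, zero_mul, add_zero]
  apply Finset.sum_congr rfl
  intro k hk
  rw [mem_range] at hk
  congr 2
  have : m + 1 - k = (m - k) + 1 := by omega
  rw [this, Function.iterate_succ_apply]
end

section
/- Let b > 0 and let g ∈ ℝ[x] have degree at most n, written in the rising factorial basis as g = ∑_{k=0}^{n} a_k · x(x+b)⋯(x+(k-1)b). Then (Δ*_{b,n} g)(x + b) = ∑_{k=0}^{n-1} (n-k) a_k · x(x+b)⋯(x+(k-1)b), where (Δ*_{b,n} g)(x) := n·g(x-b) - (x-b)·(Δ_b g)(x) and (Δ_b g)(x) = (g(x)-g(x-b))/b. -/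
open Polynomial Finset

/-- The "polar"-type operator `(Δ*_{b,n} g)(x) = n g(x-b) - (x-b)(Δ_b g)(x)`. -/
noncomputable def deltastar (b : ℝ) (n : ℕ) (g : Polynomial ℝ) : Polynomial ℝ :=
  Polynomial.C (n : ℝ) * g.comp (Polynomial.X - Polynomial.C b) -
    (Polynomial.X - Polynomial.C b) * deltab b g

/-- The rising factorial polynomial `ν_b^k(x) = x(x+b)⋯(x+(k-1)b)`. -/
noncomputable def rising (b : ℝ) (k : ℕ) : Polynomial ℝ :=
  ∏ j ∈ range k, (Polynomial.X + Polynomial.C (j * b))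

lemma rising_succ (b : ℝ) (k : ℕ) :
    rising b (k+1) = rising b k * (Polynomial.X + Polynomial.C (k * b)) := by
  simp [rising, Finset.prod_range_succ]

lemma rising_succ_shift (b : ℝ) (k : ℕ) :
    (rising b (k+1)).comp (Polynomial.X - Polynomial.C b)
      = (Polynomial.X - Polynomial.C b) * rising b k := by
  unfold rising
  rw [Polynomial.prod_comp, Finset.prod_range_succ']
  simp only [add_comp, X_comp, C_comp]
  rw [mul_comm]
  congr 1
  · simp
  · apply Finset.prod_congr rfl
    intro j _
    have : ((j:ℝ)+1) * b = j*b + b := by ring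
    push_cast [this, Polynomial.C_add]
    ring

lemma deltab_rising (b : ℝ) (hb : b ≠ 0) (k : ℕ) :
    deltab b (rising b (k+1)) = Polynomial.C ((k:ℝ)+1) * rising b k := by
  unfold deltab
  rw [rising_succ_shift, rising_succ]
  have : rising b k * (Polynomial.X + Polynomial.C ((k:ℝ) * b))
      - (Polynomial.X - Polynomial.C b) * rising b k
      = Polynomial.C (((k:ℝ)+1)*b) * rising b k := by
    rw [Polynomial.C_mul]; ring_nf
    rw [Polynomial.C_add, Polynomial.C_mul]
    ring
  rw [this, ← mul_assoc, ← Polynomial.C_mul]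
  congr 2
  field_simp

lemma deltastar_rising (b : ℝ) (hb : b ≠ 0) (n k : ℕ) :
    (deltastar b n (rising b k)).comp (Polynomial.X + Polynomial.C b)
      = Polynomial.C ((n:ℝ) - k) * rising b k := by
  cases k with
  | zero =>
      simp [deltastar, deltab, rising]
  | succ k =>
      unfold deltastar
      rw [deltab_rising b hb, rising_succ_shift]
      have : Polynomial.C (n:ℝ) * ((Polynomial.X - Polynomial.C b) * rising b k)
          - (Polynomial.X - Polynomial.C b) * (Polynomial.C ((k:ℝ)+1) * rising b k)
          = Polynomial.C ((n:ℝ) - (k+1)) * ((Polynomial.X - Polynomial.C b) * rising b k) := by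
        rw [Polynomial.C_sub, Polynomial.C_add]
        push_cast
        ring
      rw [this, ← rising_succ_shift, Polynomial.mul_comp, Polynomial.C_comp,
        Polynomial.comp_assoc]
      have h2 : (Polynomial.X - Polynomial.C b).comp (Polynomial.X + Polynomial.C b)
          = (Polynomial.X : Polynomial ℝ) := by
        simp
      rw [h2, Polynomial.comp_X]
      norm_num

lemma deltastar_sum (b : ℝ) (n : ℕ) {ι : Type*} (s : Finset ι) (f : ι → Polynomial ℝ) :
    deltastar b n (∑ k ∈ s, f k) = ∑ k ∈ s, deltastar b n (f k) := by
  unfold deltastar deltab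
  simp [Polynomial.sum_comp, Finset.mul_sum, ← Finset.sum_sub_distrib]

lemma deltastar_C_mul (b : ℝ) (n : ℕ) (c : ℝ) (p : Polynomial ℝ) :
    deltastar b n (Polynomial.C c * p) = Polynomial.C c * deltastar b n p := by
  unfold deltastar deltab
  rw [Polynomial.mul_comp, Polynomial.C_comp]
  ring

/-- After a shift by `b`, the operator `Δ*_{b,n}` acts diagonally on the rising
factorial basis: if `g = ∑_{k=0}^n a_k ν_b^k`, then
`(Δ*_{b,n} g)(x+b) = ∑_{k=0}^{n-1} (n-k) a_k ν_b^k`. -/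
theorem stmt_8 (b : ℝ) (hb : 0 < b) (n : ℕ) (g : Polynomial ℝ)
    (hg : g.natDegree ≤ n) (a : ℕ → ℝ)
    (ha : g = ∑ k ∈ range (n + 1), Polynomial.C (a k) * rising b k) :
    (deltastar b n g).comp (Polynomial.X + Polynomial.C b) =
      ∑ k ∈ range n, Polynomial.C (((n : ℝ) - k) * a k) * rising b k := by
  have hb' : b ≠ 0 := ne_of_gt hb
  rw [ha, deltastar_sum, Polynomial.sum_comp]
  have hterm : ∀ k, (deltastar b n (Polynomial.C (a k) * rising b k)).comp
      (Polynomial.X + Polynomial.C b) = Polynomial.C (((n:ℝ) - k) * a k) * rising b k := by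
    intro k
    rw [deltastar_C_mul, Polynomial.mul_comp, Polynomial.C_comp, deltastar_rising b hb',
      ← mul_assoc, ← Polynomial.C_mul, mul_comm (a k)]
  simp only [hterm]
  rw [Finset.sum_range_succ]
  simp
end

section
/- Let f, g ∈ ℝ[x] with f'g − fg' ≤ 0 pointwise on ℝ (write f ≪ g), and suppose both f and g are monic of the same degree with all real roots. Then the largest real root of f is at most the largest real root of g. -/
open Polynomial

/-- `f ≪ g`: the Wronskian condition `f'g - fg' ≤ 0` everywhere on `ℝ`. -/
def interlacesBelow (f g : Polynomial ℝ) : Prop :=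
  ∀ x : ℝ, (Polynomial.derivative f).eval x * g.eval x -
    f.eval x * (Polynomial.derivative g).eval x ≤ 0

/-- A real polynomial has all real roots when its root multiset is as large as
its degree. -/
def realRooted (f : Polynomial ℝ) : Prop := Multiset.card f.roots = f.natDegree

/-- If `f ≪ g` with `f, g` monic real-rooted of the same degree `≥ 1`, then the
largest root of `f` is at most the largest root of `g`. -/
theorem stmt_9 (f g : Polynomial ℝ) (hfm : f.Monic) (hgm : g.Monic)
    (hdeg : f.natDegree = g.natDegree) (hd1 : 1 ≤ f.natDegree)
    (hfr : realRooted f) (hgr : realRooted g) (hll : interlacesBelow f g) :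
    ∀ x ∈ f.roots, ∃ y ∈ g.roots, x ≤ y := by
  intro x hx
  by_contra hcon
  push_neg at hcon
  -- g is positive on [x, ∞)
  have hgfac : (g.roots.map fun a => X - C a).prod = g :=
    prod_multiset_X_sub_C_of_monic_of_roots_card_eq hgm hgr
  have hgpos : ∀ t, x ≤ t → 0 < g.eval t := by
    intro t ht
    have : g.eval t = (g.roots.map fun a => t - a).prod := by
      conv_lhs => rw [← hgfac]
      rw [eval_multiset_prod, Multiset.map_map]
      simp
    rw [this]
    apply Multiset.prod_pos
    intro a ha
    rw [Multiset.mem_map] at ha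
    obtain ⟨r, hr, rfl⟩ := ha
    have := hcon r hr
    linarith
  set F : ℝ → ℝ := fun t => f.eval t / g.eval t with hF
  have hderiv : ∀ t ∈ Set.Ici x, HasDerivAt F
      (((derivative f).eval t * g.eval t - f.eval t * (derivative g).eval t) /
        (g.eval t) ^ 2) t := by
    intro t ht
    exact (f.hasDerivAt t).div (g.hasDerivAt t) (ne_of_gt (hgpos t ht))
  have hanti : AntitoneOn F (Set.Ici x) := by
    apply antitoneOn_of_deriv_nonpos (convex_Ici x)
    · exact fun t ht => (hderiv t ht).continuousAt.continuousWithinAt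
    · intro t ht
      rw [interior_Ici] at ht
      exact (hderiv t (Set.mem_Ici.mpr (le_of_lt (Set.mem_Ioi.mp ht)))).differentiableAt.differentiableWithinAt
    · intro t ht
      rw [interior_Ici] at ht
      rw [(hderiv t (Set.mem_Ici.mpr (le_of_lt (Set.mem_Ioi.mp ht)))).deriv]
      apply div_nonpos_of_nonpos_of_nonneg (hll t) (sq_nonneg _)
  have hFx : F x = 0 := by
    have : f.eval x = 0 := (isRoot_of_mem_roots hx)
    simp [hF, this]
  have hfneg : ∀ t, x ≤ t → f.eval t ≤ 0 := by
    intro t ht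
    have h1 : F t ≤ F x := hanti (Set.self_mem_Ici) ht ht
    rw [hFx] at h1
    have := hgpos t ht
    have : f.eval t = F t * g.eval t := by
      simp only [hF]
      exact (div_mul_cancel₀ _ (ne_of_gt this)).symm
    rw [this]
    exact mul_nonpos_of_nonpos_of_nonneg h1 (le_of_lt (hgpos t ht))
  -- but f → ∞
  have htop : Filter.Tendsto (fun t => f.eval t) Filter.atTop Filter.atTop := by
    apply Polynomial.tendsto_atTop_of_leadingCoeff_nonneg
    · rw [degree_eq_natDegree hfm.ne_zero]
      exact_mod_cast hd1
    · rw [hfm.leadingCoeff]; norm_num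
  obtain ⟨t, ht1, ht2⟩ := (htop.eventually_ge_atTop 1).and (Filter.eventually_ge_atTop x) |>.exists
  linarith [hfneg t ht2]
end

section
/- Let f ∈ ℝ[x] be monic of degree n with n simple real roots α_1, ..., α_n, and let g ∈ ℝ[x] have degree at most n. Write g = c·f + ∑_{k=1}^{n} c_k · f_k where f_k(x) := f(x)/(x − α_k). Then f'g − fg' ≤ 0 on ℝ (i.e., f ≪ g) if and only if c_k ≤ 0 for all k, and g'f − gf' ≤ 0 on ℝ (i.e., g ≪ f) if and only if c_k ≥ 0 for all k. -/
open Polynomial Finset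

/-- For `f` monic with `n` simple real roots `α_1, …, α_n` and
`g = c f + ∑_k c_k f_{α_k}` (with `f_{α_k} = f/(x - α_k)`), one has
`f ≪ g` iff all `c_k ≤ 0`, and `g ≪ f` iff all `c_k ≥ 0`. -/
theorem stmt_10 (n : ℕ) (α : Fin n → ℝ) (hα : Function.Injective α)
    (f g : Polynomial ℝ)
    (hf : f = ∏ k : Fin n, (Polynomial.X - Polynomial.C (α k)))
    (c : ℝ) (cc : Fin n → ℝ)
    (hg : g = Polynomial.C c * f +
      ∑ k : Fin n, Polynomial.C (cc k) *
        ∏ j ∈ Finset.univ.erase k, (Polynomial.X - Polynomial.C (α j))) :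
    (interlacesBelow f g ↔ ∀ k, cc k ≤ 0) ∧
    (interlacesBelow g f ↔ ∀ k, 0 ≤ cc k) := by
  set Fk : Fin n → Polynomial ℝ :=
    fun k => ∏ j ∈ Finset.univ.erase k, (X - C (α j)) with hFk
  have hfk : ∀ k, f = (X - C (α k)) * Fk k := by
    intro k
    rw [hf]
    exact (Finset.mul_prod_erase univ _ (mem_univ k)).symm
  have key : ∀ k, derivative f * Fk k - f * derivative (Fk k) = (Fk k) ^ 2 := by
    intro k
    rw [hfk k, derivative_mul]
    simp only [derivative_sub, derivative_X, derivative_C, sub_zero]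
    ring
  have hW : derivative f * g - f * derivative g = ∑ k, C (cc k) * (Fk k) ^ 2 := by
    have hdg : derivative g = C c * derivative f + ∑ k, C (cc k) * derivative (Fk k) := by
      rw [hg, derivative_add, derivative_mul, derivative_C, zero_mul, zero_add,
        derivative_sum]
      congr 1
      refine Finset.sum_congr rfl fun k _ => ?_
      rw [derivative_mul, derivative_C, zero_mul, zero_add]
    rw [hdg, hg, mul_add, mul_add, Finset.mul_sum, Finset.mul_sum,
      add_sub_add_comm, ← Finset.sum_sub_distrib]
    have h0 : derivative f * (C c * f) - f * (C c * derivative f) = 0 := by ring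
    rw [h0, zero_add]
    refine Finset.sum_congr rfl fun k _ => ?_
    calc derivative f * (C (cc k) * Fk k) - f * (C (cc k) * derivative (Fk k))
        = C (cc k) * (derivative f * Fk k - f * derivative (Fk k)) := by ring
      _ = C (cc k) * (Fk k) ^ 2 := by rw [key k]
  have hWx : ∀ x : ℝ, (derivative f).eval x * g.eval x - f.eval x * (derivative g).eval x
      = ∑ k, cc k * ((Fk k).eval x) ^ 2 := by
    intro x
    have := congrArg (eval x) hW
    simpa [eval_finset_sum] using this
  have hzero : ∀ j k, k ≠ j → (Fk k).eval (α j) = 0 := by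
    intro j k hkj
    rw [hFk]
    simp only [eval_prod, eval_sub, eval_X, eval_C]
    exact Finset.prod_eq_zero (Finset.mem_erase.mpr ⟨Ne.symm hkj, mem_univ j⟩)
      (by simp)
  have hne : ∀ j, (Fk j).eval (α j) ≠ 0 := by
    intro j
    rw [hFk]
    simp only [eval_prod, eval_sub, eval_X, eval_C]
    refine Finset.prod_ne_zero_iff.mpr fun i hi => ?_
    have hij : i ≠ j := (Finset.mem_erase.mp hi).1
    exact sub_ne_zero.mpr fun h => hij (hα h).symm
  have hsum : ∀ j, (∑ k, cc k * ((Fk k).eval (α j)) ^ 2)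
      = cc j * ((Fk j).eval (α j)) ^ 2 := by
    intro j
    refine Finset.sum_eq_single j (fun k _ hk => ?_) (by simp)
    rw [hzero j k hk]
    ring
  constructor
  · constructor
    · intro h k
      have hx := h (α k)
      rw [hWx, hsum] at hx
      have hpos : 0 < ((Fk k).eval (α k)) ^ 2 := pow_two_pos_of_ne_zero (hne k)
      nlinarith
    · intro h x
      rw [hWx]
      exact Finset.sum_nonpos fun k _ =>
        mul_nonpos_iff.mpr (Or.inr ⟨h k, sq_nonneg _⟩)
  · have hWx' : ∀ x : ℝ, (derivative g).eval x * f.eval x - g.eval x * (derivative f).eval x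
        = -∑ k, cc k * ((Fk k).eval x) ^ 2 := by
      intro x
      rw [← hWx x]
      ring
    constructor
    · intro h k
      have hx := h (α k)
      rw [hWx', hsum] at hx
      have hpos : 0 < ((Fk k).eval (α k)) ^ 2 := pow_two_pos_of_ne_zero (hne k)
      nlinarith
    · intro h x
      rw [hWx', neg_nonpos]
      exact Finset.sum_nonneg fun k _ =>
        mul_nonneg (h k) (sq_nonneg _)
end

section
/- Let b > 0 and let f ∈ ℝ[x] be a real-rooted polynomial of degree n whose roots λ_1 ≤ ... ≤ λ_n satisfy λ_{i+1} − λ_i ≥ b for all i (f is b-mesh). Then Δ_b f, where (Δ_b f)(x) = (f(x) − f(x−b))/b, is real-rooted of degree n−1, is b-mesh, and its roots interlace those of f: Δ_b f ≪ f. -/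
open Polynomial

/-- `f` is `b`-mesh: all roots are simple and any two distinct roots differ
by at least `b`. -/
def bMesh (b : ℝ) (f : Polynomial ℝ) : Prop :=
  f.roots.Nodup ∧ ∀ x ∈ f.roots, ∀ y ∈ f.roots, x ≠ y → b ≤ |x - y|

open Finset

lemma list_prod_getD {M : Type*} [CommMonoid M] (l : List ℝ) (F : ℝ → M) :
    (l.map F).prod = ∏ i ∈ Finset.range l.length, F (l.getD i 0) := by
  induction l with
  | nil => simp
  | cons a l ih => simp [Finset.prod_range_succ', ih, mul_comm]

lemma signed_prod_pos (s t : Finset ℕ) (F : ℕ → ℝ) (hts : t ⊆ s)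
    (h1 : ∀ j ∈ t, F j < 0) (h2 : ∀ j ∈ s \ t, 0 < F j) :
    0 < (-1 : ℝ) ^ t.card * ∏ j ∈ s, F j := by
  rw [← Finset.prod_sdiff hts]
  have ht : ∏ j ∈ t, F j = (-1 : ℝ) ^ t.card * ∏ j ∈ t, (-F j) := by
    rw [← Finset.prod_const, ← Finset.prod_mul_distrib]
    simp
  rw [ht]
  have h1' : 0 < ∏ j ∈ t, (-F j) := Finset.prod_pos fun j hj => neg_pos.2 (h1 j hj)
  have h2' : 0 < ∏ j ∈ s \ t, F j := Finset.prod_pos h2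
  have hsq : ((-1 : ℝ) ^ t.card) * ((-1 : ℝ) ^ t.card) = 1 := by
    rw [← pow_add, ← two_mul, pow_mul]; norm_num
  calc (0:ℝ) < (∏ j ∈ s \ t, F j) * ∏ j ∈ t, (-F j) := mul_pos h2' h1'
    _ = (-1:ℝ)^t.card * ((∏ j ∈ s \ t, F j) * ((-1:ℝ)^t.card * ∏ j ∈ t, (-F j))) := by
        rw [show ∀ x y : ℝ, (-1:ℝ)^t.card * (x * ((-1:ℝ)^t.card * y)) = ((-1:ℝ)^t.card * (-1:ℝ)^t.card) * (x*y) from fun x y => by ring, hsq, one_mul]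

set_option maxHeartbeats 2000000 in

lemma S_nonneg (b : ℝ) (hb : 0 < b) (n : ℕ) (d : ℕ → ℝ)
    (hgapk : ∀ i k, i + k < n → d i + k * b ≤ d (i + k)) (x : ℝ) :
    0 ≤ ∑ i ∈ range n, ∏ j ∈ (range n).erase i, ((x - d j) * (x - d j - b)) := by
  set Q : ℕ → ℝ := fun j => (x - d j) * (x - d j - b) with hQdef
  by_cases hex : ∃ i ∈ range n, Q i < 0
  · obtain ⟨i₀, hi₀, hQneg⟩ := hex
    rw [mem_range] at hi₀
    set t := x - d i₀ with htdef
    have ht0 : 0 < t := by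
      rcases mul_neg_iff.1 hQneg with ⟨h1, h2⟩ | ⟨h1, h2⟩
      · exact h1
      · linarith
    have htb : t < b := by
      rcases mul_neg_iff.1 hQneg with ⟨h1, h2⟩ | ⟨h1, h2⟩
      · linarith
      · linarith
    have hQi₀ : Q i₀ = t * (t - b) := rfl
    -- lower bounds on Q j for j ≠ i₀
    have hlow_left : ∀ m, ∀ j, j + (m+1) = i₀ → (t + m*b) * (t + (m+1)*b) ≤ Q j ∧ 0 < (t + m*b) * (t + (m+1)*b) := by
      intro m j hj
      have hg := hgapk j (m+1) (by omega)
      rw [hj] at hg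
      have hxd : t + (m+1)*b ≤ x - d j := by
        have : d i₀ - d j ≥ ((m:ℝ)+1)*b := by push_cast at hg ⊢; linarith
        push_cast; linarith
      have hm0 : (0:ℝ) ≤ m * b := by positivity
      have h1 : 0 < t + (m:ℝ)*b := by linarith
      have h2 : 0 < t + ((m:ℝ)+1)*b := by nlinarith
      have hxb : t + (m:ℝ)*b ≤ x - d j - b := by push_cast at hxd; linarith
      have hxd' : t + ((m:ℝ)+1)*b ≤ x - d j := by push_cast at hxd; linarith
      constructor
      · have hmm := mul_le_mul hxd' hxb (le_of_lt h1) (by linarith)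
        have : Q j = (x - d j) * (x - d j - b) := rfl
        push_cast
        nlinarith [hmm]
      · push_cast; positivity
    have hlow_right : ∀ m, i₀ + 1 + m < n → ((m+1)*b - t) * ((m+2)*b - t) ≤ Q (i₀+1+m) ∧ 0 < ((m+1)*b - t) * ((m+2)*b - t) := by
      intro m hm
      have hg := hgapk i₀ (m+1) (by omega)
      have hj : i₀ + (m + 1) = i₀ + 1 + m := by omega
      rw [hj] at hg
      have hxd : ((m:ℝ)+1)*b - t ≤ d (i₀+1+m) - x := by push_cast at hg ⊢; linarith
      have h1 : 0 < ((m:ℝ)+1)*b - t := by nlinarith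
      have h2 : 0 < ((m:ℝ)+2)*b - t := by nlinarith
      constructor
      · have hxb : ((m:ℝ)+2)*b - t ≤ d (i₀+1+m) + b - x := by linarith
        have hmm := mul_le_mul hxd hxb (le_of_lt h2) (by linarith)
        have hQj : Q (i₀+1+m) = (d (i₀+1+m) - x) * (d (i₀+1+m) + b - x) := by
          show (x - d (i₀+1+m)) * (x - d (i₀+1+m) - b) = _
          ring
        rw [hQj]; push_cast; nlinarith [hmm]
      · exact mul_pos h1 h2
    -- positivity of Q j for j ≠ i₀
    have hQpos : ∀ j ∈ (range n).erase i₀, 0 < Q j := by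
      intro j hj
      obtain ⟨hne, hjn⟩ := mem_erase.1 hj
      rw [mem_range] at hjn
      rcases lt_or_gt_of_ne hne with h | h
      · obtain ⟨h1, h2⟩ := hlow_left (i₀ - j - 1) j (by omega)
        linarith
      · obtain ⟨h1, h2⟩ := hlow_right (j - i₀ - 1) (by omega)
        have : i₀ + 1 + (j - i₀ - 1) = j := by omega
        rw [this] at h1
        linarith

    -- the comparison sum E
    set E : ℕ → ℝ := fun i => t*(b-t)/Q i with hEdef
    have htbt : 0 ≤ t*(b-t) := by nlinarith
    have hEbound : ∑ i ∈ (range n).erase i₀, E i ≤ 1 := by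
      have hsplit : (range n).erase i₀ = range i₀ ∪ Ico (i₀+1) n := by
        ext j; simp only [mem_erase, mem_range, mem_union, mem_Ico]; omega
      have hdisj : Disjoint (range i₀) (Ico (i₀+1) n) := by
        simp only [Finset.disjoint_left, mem_range, mem_Ico]; omega
      rw [hsplit, Finset.sum_union hdisj]
      set v : ℕ → ℝ := fun m => t*(b-t)/(b*(m*b+t)) with hvdef
      set w : ℕ → ℝ := fun m => t*(b-t)/(b*((m+1)*b-t)) with hwdef
      have hvpos : ∀ m : ℕ, 0 < b*((m:ℝ)*b+t) := by
        intro m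
        have : (0:ℝ) ≤ (m:ℝ)*b := by positivity
        nlinarith
      have hwpos : ∀ m : ℕ, 0 < b*(((m:ℝ)+1)*b-t) := by
        intro m
        have : (0:ℝ) ≤ (m:ℝ)*b := by positivity
        nlinarith
      have hleft : ∑ j ∈ range i₀, E j ≤ (b-t)/b := by
        calc ∑ j ∈ range i₀, E j = ∑ m ∈ range i₀, E (i₀-1-m) := (Finset.sum_range_reflect E i₀).symm
          _ ≤ ∑ m ∈ range i₀, (v m - v (m+1)) := by
              apply Finset.sum_le_sum
              intro m hm
              rw [mem_range] at hm
              obtain ⟨h1, h2⟩ := hlow_left m (i₀-1-m) (by omega)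
              have hv : v m - v (m+1) = t*(b-t)/((t+m*b)*(t+(m+1)*b)) := by
                rw [hvdef]
                have d1 := hvpos m
                have d2 := hvpos (m+1)
                push_cast at d1 d2 ⊢
                field_simp
                ring
              rw [hv, hEdef]
              have hQj : 0 < Q (i₀-1-m) := by linarith
              rw [div_le_div_iff₀ hQj h2]
              push_cast
              nlinarith [h1]
          _ = v 0 - v i₀ := Finset.sum_range_sub' v i₀
          _ ≤ v 0 := by
              have : 0 ≤ v i₀ := le_of_lt (div_pos (by nlinarith) (hvpos i₀))
              linarith
          _ = (b-t)/b := by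
              rw [hvdef]
              push_cast
              rw [show b*((0:ℝ)*b+t) = b*t by ring]
              rw [div_eq_div_iff (by nlinarith) (by nlinarith)]
              ring
      have hright : ∑ j ∈ Ico (i₀+1) n, E j ≤ t/b := by
        calc ∑ j ∈ Ico (i₀+1) n, E j = ∑ m ∈ range (n-(i₀+1)), E (i₀+1+m) := Finset.sum_Ico_eq_sum_range E (i₀+1) n
          _ ≤ ∑ m ∈ range (n-(i₀+1)), (w m - w (m+1)) := by
              apply Finset.sum_le_sum
              intro m hm
              rw [mem_range] at hm
              obtain ⟨h1, h2⟩ := hlow_right m (by omega)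
              have hw : w m - w (m+1) = t*(b-t)/((((m:ℝ)+1)*b-t)*(((m:ℝ)+2)*b-t)) := by
                rw [hwdef]
                have d1 := hwpos m
                have d2 := hwpos (m+1)
                push_cast at d1 d2 ⊢
                rw [div_sub_div _ _ (ne_of_gt d1) (ne_of_gt d2), div_eq_div_iff (mul_ne_zero (ne_of_gt d1) (ne_of_gt d2)) (ne_of_gt h2)]
                ring
              rw [hw, hEdef]
              have hQj : 0 < Q (i₀+1+m) := by linarith
              rw [div_le_div_iff₀ hQj (by nlinarith [h2])]
              push_cast
              nlinarith [h1]
          _ = w 0 - w (n-(i₀+1)) := Finset.sum_range_sub' w (n-(i₀+1))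
          _ ≤ w 0 := by
              have : 0 ≤ w (n-(i₀+1)) := le_of_lt (div_pos (by nlinarith) (hwpos _))
              linarith
          _ = t/b := by
              rw [hwdef]
              push_cast
              rw [show b*(((0:ℝ)+1)*b-t) = b*(b-t) by ring]
              rw [div_eq_div_iff (by nlinarith) hb.ne']
              ring
      calc ∑ j ∈ range i₀, E j + ∑ j ∈ Ico (i₀+1) n, E j ≤ (b-t)/b + t/b := by linarith
        _ = 1 := by field_simp; ring
    -- decompose the sum
    have hi₀' : i₀ ∈ range n := mem_range.2 hi₀
    rw [← Finset.sum_erase_add (range n) _ hi₀']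
    set P : ℝ := ∏ j ∈ (range n).erase i₀, Q j with hPdef
    have hP : 0 < P := Finset.prod_pos hQpos
    have hT : ∀ i ∈ (range n).erase i₀, ∏ j ∈ (range n).erase i, Q j = -(E i * P) := by
      intro i hi
      obtain ⟨hne, hin⟩ := mem_erase.1 hi
      have hQi : 0 < Q i := hQpos i hi
      have hcomm : ((range n).erase i).erase i₀ = ((range n).erase i₀).erase i := by
        ext a; simp only [mem_erase]; tauto
      have e1 : ∏ j ∈ (range n).erase i, Q j = Q i₀ * ∏ j ∈ ((range n).erase i₀).erase i, Q j := by
        rw [← hcomm]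
        exact (Finset.mul_prod_erase _ Q (mem_erase.2 ⟨(Ne.symm hne), hi₀'⟩)).symm
      have e2 : P = Q i * ∏ j ∈ ((range n).erase i₀).erase i, Q j :=
        (Finset.mul_prod_erase _ Q hi).symm
      rw [e1, hEdef, hQi₀]
      rw [e2]
      field_simp
      ring
    rw [Finset.sum_congr rfl hT]
    have : ∑ i ∈ (range n).erase i₀, -(E i * P) = -((∑ i ∈ (range n).erase i₀, E i) * P) := by
      rw [Finset.sum_neg_distrib, Finset.sum_mul]
    rw [this]
    nlinarith [hP, hEbound]
  · push_neg at hex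
    exact Finset.sum_nonneg fun i _ => Finset.prod_nonneg fun j hj => hex j (mem_of_mem_erase hj)

set_option maxHeartbeats 2000000 in
lemma key (b : ℝ) (hb : 0 < b) (n : ℕ) (hn : 1 ≤ n) (f : Polynomial ℝ)
    (hdeg : f.natDegree = n) (hfr : realRooted f) (hfm : bMesh b f)
    (hpos : 0 < f.leadingCoeff) :
    (deltab b f).natDegree = n - 1 ∧ realRooted (deltab b f) ∧
      bMesh b (deltab b f) ∧ interlacesBelow (deltab b f) f := by
  have hfr' : Multiset.card f.roots = f.natDegree := hfr
  set a := f.leadingCoeff with ha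
  have ha0 : a ≠ 0 := ne_of_gt hpos
  have hf0 : f ≠ 0 := fun h => by simp [h] at ha0; exact ha0 (by simp [ha, h])
  -- sorted roots
  set l : List ℝ := f.roots.sort (· ≤ ·) with hl
  have hcoe : (l : Multiset ℝ) = f.roots := Multiset.sort_eq _ _
  have hlen : l.length = n := by rw [hl, Multiset.length_sort, hfr', hdeg]
  set d : ℕ → ℝ := fun i => l.getD i 0 with hd
  have hdget : ∀ i (hi : i < n), d i = l.get ⟨i, by omega⟩ := by
    intro i hi
    rw [hd]
    simp only [List.getD_eq_getElem l 0 (show i < l.length by omega)]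
    rfl
  have hmem : ∀ i, i < n → d i ∈ f.roots := by
    intro i hi
    rw [← hcoe, hdget i hi]
    exact Multiset.mem_coe.2 (List.get_mem l ⟨i, by omega⟩)
  have hsort : l.Pairwise (· ≤ ·) := Multiset.pairwise_sort _ _
  have hnodup : l.Nodup := by rw [← Multiset.coe_nodup, hcoe]; exact hfm.1
  have hgap1 : ∀ i j, i < j → j < n → d i + b ≤ d j := by
    intro i j hij hj
    have hi : i < n := lt_trans hij hj
    have hle : d i ≤ d j := by
      rw [hdget i hi, hdget j hj]
      exact List.pairwise_iff_get.1 hsort ⟨i, by omega⟩ ⟨j, by omega⟩ (by simpa using hij)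
    have hne : d i ≠ d j := by
      rw [hdget i hi, hdget j hj]
      exact List.pairwise_iff_get.1 hnodup ⟨i, by omega⟩ ⟨j, by omega⟩ (by simpa using hij)
    have habs := hfm.2 (d i) (hmem i hi) (d j) (hmem j hj) hne
    rw [abs_sub_comm, abs_of_nonneg (by linarith)] at habs
    linarith
  have hmono : ∀ i j, i ≤ j → j < n → d i ≤ d j := by
    intro i j hij hj
    rcases eq_or_lt_of_le hij with h | h
    · rw [h]
    · linarith [hgap1 i j h hj]
  have hgapk : ∀ i k, i + k < n → d i + k * b ≤ d (i + k) := by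
    intro i k
    induction k with
    | zero => intro _; simp
    | succ m ih =>
        intro hik
        have h1 := ih (by omega)
        have h2 := hgap1 (i+m) (i+m+1) (by omega) (by omega)
        have : i + (m+1) = i + m + 1 := by omega
        rw [this]
        push_cast
        linarith
  -- factorization
  have hfact : f = C a * ∏ i ∈ range n, (X - C (d i)) := by
    conv_lhs => rw [← C_leadingCoeff_mul_prod_multiset_X_sub_C hfr']
    congr 1
    rw [← hcoe, Multiset.map_coe, Multiset.prod_coe, list_prod_getD l (fun r => X - C r), hlen]
  have heval : ∀ x : ℝ, f.eval x = a * ∏ i ∈ range n, (x - d i) := by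
    intro x
    conv_lhs => rw [hfact]
    rw [eval_mul, eval_C, eval_prod]
    simp
  have hderiv : ∀ x : ℝ, (derivative f).eval x
      = a * ∑ i ∈ range n, ∏ j ∈ (range n).erase i, (x - d j) := by
    intro x
    conv_lhs => rw [hfact]
    rw [derivative_C_mul]
    have hder : derivative (∏ i ∈ range n, (X - C (d i)))
        = ∑ i ∈ range n, (∏ j ∈ (range n).erase i, (X - C (d j))) * derivative (X - C (d i)) :=
      Polynomial.derivative_prod
    rw [hder]
    simp only [derivative_X_sub_C, mul_one]
    rw [eval_mul, eval_C, eval_finset_sum]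
    congr 1
    refine Finset.sum_congr rfl fun i _ => ?_
    rw [eval_prod]
    simp
  set fb := f.comp (X - C b) with hfbdef
  have hfbeval : ∀ x : ℝ, fb.eval x = a * ∏ i ∈ range n, (x - b - d i) := by
    intro x
    rw [hfbdef, eval_comp]
    simp only [eval_sub, eval_X, eval_C]
    rw [heval (x - b)]
  have hfbd : ∀ x : ℝ, (derivative fb).eval x
      = a * ∑ i ∈ range n, ∏ j ∈ (range n).erase i, (x - b - d j) := by
    intro x
    rw [hfbdef, Polynomial.derivative_comp]
    simp only [derivative_X_sub_C, one_mul]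
    rw [eval_comp]
    simp only [eval_sub, eval_X, eval_C]
    rw [hderiv (x - b)]
  set g := f - fb with hgdef
  have hgeval : ∀ x : ℝ, g.eval x
      = a * ∏ i ∈ range n, (x - d i) - a * ∏ i ∈ range n, (x - b - d i) := by
    intro x
    rw [hgdef, eval_sub, heval, hfbeval]
  -- sign of g on the intervals (d i, d i + b)
  have hsign : ∀ i, i < n → ∀ x, d i < x → x < d i + b →
      0 < (-1:ℝ)^(n-1-i) * g.eval x := by
    intro i hi x hx1 hx2
    have c1 : 0 < (-1:ℝ)^(n-1-i) * ∏ j ∈ range n, (x - d j) := by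
      have hcard : ((range n).filter (fun j => i < j)).card = n - 1 - i := by
        have : (range n).filter (fun j => i < j) = Ico (i+1) n := by
          ext j; simp only [mem_filter, mem_range, mem_Ico]; omega
        rw [this, Nat.card_Ico]; omega
      rw [← hcard]
      apply signed_prod_pos _ _ _ (filter_subset _ _)
      · intro j hj
        obtain ⟨hjn, hij⟩ := mem_filter.1 hj
        rw [mem_range] at hjn
        have := hgap1 i j hij hjn
        linarith
      · intro j hj
        rw [mem_sdiff, mem_filter, mem_range] at hj
        have hji : j ≤ i := by omega
        have hjn : j < n := by omega
        have : d j ≤ d i := hmono j i hji hi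
        linarith
    have c2 : 0 < (-1:ℝ)^(n-i) * ∏ j ∈ range n, (x - b - d j) := by
      have hcard : ((range n).filter (fun j => i ≤ j)).card = n - i := by
        have : (range n).filter (fun j => i ≤ j) = Ico i n := by
          ext j; simp only [mem_filter, mem_range, mem_Ico]; omega
        rw [this, Nat.card_Ico]
      rw [← hcard]
      apply signed_prod_pos _ _ _ (filter_subset _ _)
      · intro j hj
        obtain ⟨hjn, hij⟩ := mem_filter.1 hj
        rw [mem_range] at hjn
        have : d i ≤ d j := hmono i j hij hjn
        linarith
      · intro j hj
        rw [mem_sdiff, mem_filter, mem_range] at hj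
        have hji : j < i := by omega
        have := hgap1 j i hji hi
        linarith
    have hpow : (-1:ℝ)^(n-i) = (-1:ℝ)^(n-1-i) * (-1) := by
      rw [← pow_succ]
      congr 1
      omega
    rw [hgeval x]
    have e : (-1:ℝ)^(n-1-i) * (a * ∏ j ∈ range n, (x - d j) - a * ∏ j ∈ range n, (x - b - d j))
        = a * ((-1:ℝ)^(n-1-i) * ∏ j ∈ range n, (x - d j))
          + a * ((-1:ℝ)^(n-i) * ∏ j ∈ range n, (x - b - d j)) := by
      rw [hpow]; ring
    rw [e]
    exact add_pos (mul_pos hpos c1) (mul_pos hpos c2)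
  have hg0 : g ≠ 0 := by
    intro h
    have := hsign 0 (by omega) (d 0 + b/2) (by linarith) (by linarith)
    rw [h] at this
    simp at this
  -- degree of g
  have hfbdeg : fb.natDegree = n := by
    rw [hfbdef, natDegree_comp, natDegree_X_sub_C, mul_one, hdeg]
  have hgle : g.natDegree ≤ n := by
    refine le_trans (natDegree_sub_le f fb) ?_
    rw [hdeg, hfbdeg]; simp
  have hcoefn : g.coeff n = 0 := by
    rw [hgdef, coeff_sub]
    have h1 : f.coeff n = a := by rw [← hdeg]; exact coeff_natDegree
    have h2 : fb.coeff n = a := by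
      rw [← hfbdeg, coeff_natDegree, hfbdef]
      rw [leadingCoeff_comp (by rw [natDegree_X_sub_C]; exact one_ne_zero)]
      rw [leadingCoeff_X_sub_C, one_pow, mul_one]
    rw [h1, h2, sub_self]
  have hgne : g.natDegree ≠ n := by
    intro h
    apply hg0
    rw [← leadingCoeff_eq_zero, leadingCoeff, h, hcoefn]
  have hgle' : g.natDegree ≤ n - 1 := by omega
  -- roots of g via IVT
  have hgcont : Continuous fun y : ℝ => g.eval y := g.continuous
  have hroot : ∀ k : ℕ, ∃ μ : ℝ, k + 1 < n →
      (g.eval μ = 0 ∧ d k + b ≤ μ ∧ μ ≤ d (k+1)) := by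
    intro k
    by_cases hk : k + 1 < n
    · set x1 := d k + b/2 with hx1def
      set x2 := d (k+1) + b/2 with hx2def
      have hgap := hgap1 k (k+1) (by omega) hk
      have hx12 : x1 ≤ x2 := by rw [hx1def, hx2def]; linarith
      have hs1 := hsign k (by omega) x1 (by rw [hx1def]; linarith) (by rw [hx1def]; linarith)
      have hs2 := hsign (k+1) hk x2 (by rw [hx2def]; linarith) (by rw [hx2def]; linarith)
      have hpow : (-1:ℝ)^(n-1-k) = (-1:ℝ)^(n-1-(k+1)) * (-1) := by
        rw [← pow_succ]
        congr 1
        omega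
      have hivt : ∃ μ ∈ Set.Icc x1 x2, g.eval μ = 0 := by
        rcases neg_one_pow_eq_or ℝ (n-1-(k+1)) with hs | hs
        · rw [hs] at hs2; rw [hpow, hs] at hs1
          have h1 : g.eval x1 < 0 := by linarith
          have h2 : 0 < g.eval x2 := by linarith
          have := intermediate_value_Icc hx12 (hgcont.continuousOn)
          have h0 : (0:ℝ) ∈ Set.Icc (g.eval x1) (g.eval x2) := ⟨le_of_lt h1, le_of_lt h2⟩
          obtain ⟨μ, hμ1, hμ2⟩ := this h0
          exact ⟨μ, hμ1, hμ2⟩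
        · rw [hs] at hs2; rw [hpow, hs] at hs1
          have h1 : 0 < g.eval x1 := by linarith
          have h2 : g.eval x2 < 0 := by linarith
          have := intermediate_value_Icc' hx12 (hgcont.continuousOn)
          have h0 : (0:ℝ) ∈ Set.Icc (g.eval x2) (g.eval x1) := ⟨le_of_lt h2, le_of_lt h1⟩
          obtain ⟨μ, hμ1, hμ2⟩ := this h0
          exact ⟨μ, hμ1, hμ2⟩
      obtain ⟨μ, ⟨hμ1, hμ2⟩, hμ0⟩ := hivt
      refine ⟨μ, fun _ => ⟨hμ0, ?_, ?_⟩⟩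
      · by_contra hcon
        push_neg at hcon
        have := hsign k (by omega) μ (by rw [hx1def] at hμ1; linarith) hcon
        rw [hμ0] at this
        simp at this
      · by_contra hcon
        push_neg at hcon
        have := hsign (k+1) hk μ hcon (by rw [hx2def] at hμ2; linarith)
        rw [hμ0] at this
        simp at this
    · exact ⟨0, fun h => absurd h hk⟩
  choose μ hμ using hroot
  have hμgap : ∀ j k, j < k → k + 1 < n → μ j + b ≤ μ k := by
    intro j k hjk hk
    obtain ⟨_, _, hj2⟩ := hμ j (by omega)
    obtain ⟨_, hk1, _⟩ := hμ k hk
    have : d (j+1) ≤ d k := hmono (j+1) k (by omega) (by omega)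
    linarith
  -- the multiset of roots
  set M : Multiset ℝ := Multiset.map μ (Multiset.range (n-1)) with hM
  have hMcard : Multiset.card M = n - 1 := by
    rw [hM, Multiset.card_map, Multiset.card_range]
  have hMnodup : M.Nodup := by
    rw [hM]
    refine Multiset.Nodup.map_on ?_ (Multiset.nodup_range (n-1))
    intro x hx y hy hxy
    rw [Multiset.mem_range] at hx hy
    by_contra hne
    rcases lt_or_gt_of_ne hne with h | h
    · have := hμgap x y h (by omega); linarith
    · have := hμgap y x h (by omega); linarith
  have hMle : M ≤ g.roots := by
    classical
    rw [Multiset.le_iff_count]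
    intro r
    by_cases hr : r ∈ M
    · have h1 : M.count r = 1 := Multiset.count_eq_one_of_mem hMnodup hr
      rw [h1, Polynomial.count_roots]
      obtain ⟨k, hk, hkr⟩ := Multiset.mem_map.1 hr
      rw [Multiset.mem_range] at hk
      have hrr : g.IsRoot r := by rw [← hkr]; exact ((hμ k (by omega)).1)
      exact (Polynomial.rootMultiplicity_pos hg0).2 hrr
    · rw [Multiset.count_eq_zero_of_notMem hr]
      omega
  have hcardg : Multiset.card g.roots ≤ n - 1 := le_trans (Polynomial.card_roots' g) hgle'
  have hMeq : M = g.roots := Multiset.eq_of_le_of_card_le hMle (by rw [hMcard]; exact hcardg)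
  have hgdeg : g.natDegree = n - 1 := by
    have h1 : n - 1 ≤ g.natDegree := by
      rw [← hMcard, hMeq]
      exact Polynomial.card_roots' g
    omega
  have hbinv : (b⁻¹ : ℝ) ≠ 0 := inv_ne_zero (ne_of_gt hb)
  have hdelta : deltab b f = C b⁻¹ * g := by rw [hgdef, hfbdef]; rfl
  have hdeln : (deltab b f).natDegree = n - 1 := by
    rw [hdelta, natDegree_C_mul hbinv, hgdeg]
  have hdelroots : (deltab b f).roots = g.roots := by
    rw [hdelta, roots_C_mul _ hbinv]
  refine ⟨hdeln, ?_, ?_, ?_⟩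
  · show Multiset.card (deltab b f).roots = (deltab b f).natDegree
    rw [hdelroots, hdeln, ← hMeq, hMcard]
  · constructor
    · rw [hdelroots, ← hMeq]
      exact hMnodup
    · intro y hy z hz hyz
      rw [hdelroots, ← hMeq, hM, Multiset.mem_map] at hy hz
      obtain ⟨j, hj, rfl⟩ := hy
      obtain ⟨k, hk, rfl⟩ := hz
      rw [Multiset.mem_range] at hj hk
      have hjk : j ≠ k := fun h => hyz (by rw [h])
      rcases lt_or_gt_of_ne hjk with h | h
      · have := hμgap j k h (by omega)
        rw [abs_sub_comm, abs_of_nonneg (by linarith)]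
        linarith
      · have := hμgap k j h (by omega)
        rw [abs_of_nonneg (by linarith)]
        linarith
  · intro x
    have hpder : derivative (deltab b f) = C b⁻¹ * (derivative f - derivative fb) := by
      rw [hdelta, derivative_C_mul, hgdef, derivative_sub]
    have hpeval : (deltab b f).eval x = b⁻¹ * (f.eval x - fb.eval x) := by
      rw [hdelta, eval_mul, eval_C, hgdef, eval_sub]
    have hpdeval : (derivative (deltab b f)).eval x
        = b⁻¹ * ((derivative f).eval x - (derivative fb).eval x) := by
      rw [hpder, eval_mul, eval_C, eval_sub]
    rw [hpdeval, hpeval, heval x, hderiv x, hfbeval x, hfbd x]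
    set PA := ∏ i ∈ range n, (x - d i) with hPA
    set PB := ∏ i ∈ range n, (x - b - d i) with hPB
    set SA := ∑ i ∈ range n, ∏ j ∈ (range n).erase i, (x - d j) with hSA
    set SB := ∑ i ∈ range n, ∏ j ∈ (range n).erase i, (x - b - d j) with hSB
    set S := ∑ i ∈ range n, ∏ j ∈ (range n).erase i, ((x - d j) * (x - d j - b)) with hS
    have hiden : PB * SA - SB * PA = -b * S := by
      rw [hSA, hSB, hS, Finset.mul_sum, Finset.sum_mul, ← Finset.sum_sub_distrib, Finset.mul_sum]
      refine Finset.sum_congr rfl fun i hi => ?_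
      have e1 : PB = (x - b - d i) * ∏ j ∈ (range n).erase i, (x - b - d j) :=
        (Finset.mul_prod_erase (range n) (fun j => x - b - d j) hi).symm
      have e2 : PA = (x - d i) * ∏ j ∈ (range n).erase i, (x - d j) :=
        (Finset.mul_prod_erase (range n) (fun j => x - d j) hi).symm
      have e3 : ∏ j ∈ (range n).erase i, ((x - d j) * (x - d j - b))
          = (∏ j ∈ (range n).erase i, (x - d j)) * ∏ j ∈ (range n).erase i, (x - b - d j) := by
        rw [← Finset.prod_mul_distrib]
        exact Finset.prod_congr rfl fun j _ => by ring
      rw [e1, e2, e3]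
      ring
    have e : b⁻¹ * (a * SA - a * SB) * (a * PA) - b⁻¹ * (a * PA - a * PB) * (a * SA)
        = a^2 * b⁻¹ * (PB * SA - SB * PA) := by ring
    rw [e, hiden]
    have e2 : a^2 * b⁻¹ * (-b * S) = -(a^2 * S) := by
      field_simp
    rw [e2]
    have hSpos := S_nonneg b hb n d hgapk x
    rw [← hS] at hSpos
    exact neg_nonpos.2 (mul_nonneg (sq_nonneg a) hSpos)

/-- `Δ_b` maps real-rooted `b`-mesh polynomials of degree `n` to real-rooted
`b`-mesh polynomials of degree `n-1`, and `Δ_b f ≪ f`. -/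
theorem stmt_13 (b : ℝ) (hb : 0 < b) (n : ℕ) (hn : 1 ≤ n) (f : Polynomial ℝ)
    (hdeg : f.natDegree = n) (hfr : realRooted f) (hfm : bMesh b f) :
    (deltab b f).natDegree = n - 1 ∧ realRooted (deltab b f) ∧
      bMesh b (deltab b f) ∧ interlacesBelow (deltab b f) f := by
  have hf0 : f ≠ 0 := by
    intro h
    rw [h, natDegree_zero] at hdeg
    omega
  have hlc : f.leadingCoeff ≠ 0 := leadingCoeff_ne_zero.2 hf0
  rcases lt_or_gt_of_ne hlc with hneg | hpos
  · have hdeg' : (-f).natDegree = n := by rw [natDegree_neg, hdeg]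
    have hfr' : realRooted (-f) := by
      show Multiset.card (-f).roots = (-f).natDegree
      rw [roots_neg, natDegree_neg]
      exact hfr
    have hfm' : bMesh b (-f) := by
      constructor
      · rw [roots_neg]; exact hfm.1
      · intro x hx y hy hxy
        rw [roots_neg] at hx hy
        exact hfm.2 x hx y hy hxy
    have hpos' : 0 < (-f).leadingCoeff := by rw [leadingCoeff_neg]; linarith
    obtain ⟨h1, h2, h3, h4⟩ := key b hb n hn (-f) hdeg' hfr' hfm' hpos'
    have hdel : deltab b (-f) = -(deltab b f) := by
      unfold deltab
      rw [neg_comp]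
      ring
    rw [hdel] at h1 h2 h3 h4
    refine ⟨?_, ?_, ?_, ?_⟩
    · rw [natDegree_neg] at h1
      exact h1
    · show Multiset.card (deltab b f).roots = (deltab b f).natDegree
      have := h2
      show _
      rw [← roots_neg (deltab b f), ← natDegree_neg (deltab b f)]
      exact h2
    · constructor
      · have := h3.1
        rw [roots_neg] at this
        exact this
      · intro x hx y hy hxy
        refine h3.2 x ?_ y ?_ hxy <;> rw [roots_neg] <;> assumption
    · intro x
      have h := h4 x
      simp only [derivative_neg, eval_neg, neg_mul, mul_neg, neg_neg] at h
      linarith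
  · exact key b hb n hn f hdeg hfr hfm hpos
end

section
/- Let p ∈ ℂ[x] and for q > 0, q ≠ 1 define the algebra endomorphism E_q of ℂ[x] by E_q(x) = (1 − x)/(1 − q). Then the exponential polynomials [E_q(p)](q^x) converge to p(x) uniformly on compact subsets of ℂ as q → 1. -/
open Polynomial

/-- Key estimate: `(1 - e^t)⁻¹ (1 - e^{xt})` is within `2(R²+R)|t|` of `x`. -/
lemma stmt_18_key (R : ℝ) (hR : 1 ≤ R) (x t : ℂ) (ht0 : t ≠ 0)
    (hx : ‖x‖ ≤ R)
    (ht2 : ‖t‖ ≤ 1 / 2) (htR : ‖t‖ * R ≤ 1) :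
    ‖(1 - Complex.exp t)⁻¹ * (1 - Complex.exp (x * t)) - x‖
      ≤ 2 * (R ^ 2 + R) * ‖t‖ := by
  set a := ‖t‖ with ha
  have ha0 : 0 < a := by simpa [ha] using norm_pos_iff.mpr ht0
  have h1 : ‖Complex.exp t - 1 - t‖ ≤ a ^ 2 :=
    Complex.norm_exp_sub_one_sub_id_le (by linarith)
  have hxt : ‖x * t‖ ≤ 1 := by
    rw [norm_mul]
    calc ‖x‖ * ‖t‖ ≤ R * a := by
          exact mul_le_mul_of_nonneg_right hx (norm_nonneg t)
      _ = a * R := mul_comm _ _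
      _ ≤ 1 := htR
  have h2 : ‖Complex.exp (x * t) - 1 - x * t‖ ≤ (‖x‖ * a) ^ 2 := by
    have := Complex.norm_exp_sub_one_sub_id_le hxt
    simpa [norm_mul] using this
  -- lower bound for the denominator
  have hden : a / 2 ≤ ‖1 - Complex.exp t‖ := by
    have htri : a ≤ ‖Complex.exp t - 1‖ + ‖Complex.exp t - 1 - t‖ := by
      have heq : t = (Complex.exp t - 1) - (Complex.exp t - 1 - t) := by ring
      calc a = ‖(Complex.exp t - 1) - (Complex.exp t - 1 - t)‖ := by rw [ha, ← heq]
        _ ≤ _ := by simpa using norm_sub_le (Complex.exp t - 1) (Complex.exp t - 1 - t)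
    have h3 : a - a ^ 2 ≤ ‖Complex.exp t - 1‖ := by linarith
    have h4 : a / 2 ≤ a - a ^ 2 := by nlinarith
    have : ‖1 - Complex.exp t‖ = ‖Complex.exp t - 1‖ := by
      rw [← norm_neg]; ring_nf
    linarith [this ▸ (h4.trans h3)]
  have hden0 : (1 : ℂ) - Complex.exp t ≠ 0 := by
    intro h
    rw [h] at hden
    simp at hden
    linarith
  -- rewrite the difference
  have hrw : (1 - Complex.exp t)⁻¹ * (1 - Complex.exp (x * t)) - x
      = (1 - Complex.exp t)⁻¹ *
        (-(Complex.exp (x * t) - 1 - x * t) + x * (Complex.exp t - 1 - t)) := by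
    field_simp
    ring
  rw [hrw, norm_mul, norm_inv]
  have hnum : ‖-(Complex.exp (x * t) - 1 - x * t) + x * (Complex.exp t - 1 - t)‖
      ≤ (R ^ 2 + R) * a ^ 2 := by
    calc ‖-(Complex.exp (x * t) - 1 - x * t) + x * (Complex.exp t - 1 - t)‖
        ≤ ‖-(Complex.exp (x * t) - 1 - x * t)‖
          + ‖x * (Complex.exp t - 1 - t)‖ := norm_add_le _ _
      _ = ‖Complex.exp (x * t) - 1 - x * t‖
          + ‖x‖ * ‖Complex.exp t - 1 - t‖ := by
          rw [norm_neg, norm_mul]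
      _ ≤ (‖x‖ * a) ^ 2 + R * a ^ 2 := by
          have := mul_le_mul hx h1 (norm_nonneg _) (by linarith)
          linarith [h2]
      _ ≤ (R ^ 2 + R) * a ^ 2 := by
          have hxa : (‖x‖ * a) ^ 2 ≤ (R * a) ^ 2 := by
            apply pow_le_pow_left₀ (by positivity)
            exact mul_le_mul_of_nonneg_right hx (le_of_lt ha0)
          nlinarith
  have hinv : (‖1 - Complex.exp t‖)⁻¹ ≤ (a / 2)⁻¹ := by
    apply inv_anti₀ (by linarith) hden
  calc (‖1 - Complex.exp t‖)⁻¹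
        * ‖-(Complex.exp (x * t) - 1 - x * t) + x * (Complex.exp t - 1 - t)‖
      ≤ (a / 2)⁻¹ * ((R ^ 2 + R) * a ^ 2) := by
        apply mul_le_mul hinv hnum (norm_nonneg _) (by positivity)
    _ = 2 * (R ^ 2 + R) * a := by field_simp

/-- For the algebra endomorphism `E_q : x ↦ (1-x)/(1-q)` of `ℂ[x]`, the
exponential polynomials `[E_q(p)](q^x)` converge to `p(x)` uniformly on
compact subsets of `ℂ` as real `q → 1` (`q > 0`, `q ≠ 1`). -/
theorem stmt_18 (p : Polynomial ℂ) (K : Set ℂ) (hK : IsCompact K) :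
    TendstoUniformlyOn
      (fun (q : ℝ) (x : ℂ) =>
        (p.comp (Polynomial.C ((1 : ℂ) - (q : ℂ))⁻¹ * (1 - Polynomial.X))).eval
          (Complex.exp (x * (Real.log q : ℂ))))
      (fun x => p.eval x)
      (nhdsWithin 1 {q : ℝ | 0 < q ∧ q ≠ 1}) K := by
  rw [Metric.tendstoUniformlyOn_iff]
  intro ε hε
  -- bound K in a closed ball
  obtain ⟨R, hR1, hRK⟩ : ∃ R : ℝ, 1 ≤ R ∧ K ⊆ Metric.closedBall 0 R := by
    obtain ⟨R, hR⟩ := hK.isBounded.subset_closedBall 0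
    exact ⟨max R 1, le_max_right _ _,
      hR.trans (Metric.closedBall_subset_closedBall (le_max_left _ _))⟩
  -- uniform continuity of polynomial evaluation on a compact ball
  have hucont : UniformContinuousOn (fun z : ℂ => p.eval z) (Metric.closedBall 0 (R + 1)) :=
    (isCompact_closedBall _ _).uniformContinuousOn_of_continuous
      (p.continuous.continuousOn)
  rw [Metric.uniformContinuousOn_iff] at hucont
  obtain ⟨δ₀, hδ₀, hδ⟩ := hucont ε hε
  set δ : ℝ := min δ₀ 1 with hδdef
  have hδpos : 0 < δ := lt_min hδ₀ one_pos
  have hδ1 : δ ≤ 1 := min_le_right _ _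
  set C : ℝ := 2 * (R ^ 2 + R) with hC
  have hCpos : 0 < C := by nlinarith
  set τ : ℝ := min (min (1 / 2) (1 / R)) (δ / (C + 1)) with hτ
  have hτpos : 0 < τ := by
    apply lt_min (lt_min (by norm_num) (by positivity))
    positivity
  -- log q → 0 within the filter
  have htend : Filter.Tendsto Real.log (nhdsWithin 1 {q : ℝ | 0 < q ∧ q ≠ 1}) (nhds 0) := by
    have : Filter.Tendsto Real.log (nhds 1) (nhds (Real.log 1)) :=
      (Real.continuousAt_log one_ne_zero).tendsto
    rw [Real.log_one] at this
    exact this.mono_left nhdsWithin_le_nhds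
  have hev1 : ∀ᶠ q in nhdsWithin 1 {q : ℝ | 0 < q ∧ q ≠ 1}, |Real.log q| < τ := by
    have := Metric.tendsto_nhds.mp htend τ hτpos
    simpa [Real.dist_eq] using this
  have hev2 : ∀ᶠ q in nhdsWithin 1 {q : ℝ | 0 < q ∧ q ≠ 1},
      q ∈ {q : ℝ | 0 < q ∧ q ≠ 1} := self_mem_nhdsWithin
  filter_upwards [hev1, hev2] with q hq1 hq2
  intro x hxK
  obtain ⟨hq0, hqne⟩ := hq2
  -- basic facts about t = log q
  set t : ℂ := (Real.log q : ℂ) with htdef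
  have hlogne : Real.log q ≠ 0 := by
    intro h
    rcases Real.log_eq_zero.mp h with h' | h' | h' <;> [linarith; exact hqne h'; linarith]
  have ht0 : t ≠ 0 := by
    simp [htdef, Complex.ofReal_eq_zero, hlogne]
  have hat : ‖t‖ = |Real.log q| := by simp [htdef]
  have hatτ : ‖t‖ < τ := by rw [hat]; exact hq1
  have hqexp : (q : ℂ) = Complex.exp t := by
    rw [htdef, ← Complex.ofReal_exp, Real.exp_log hq0]
  have hxR : ‖x‖ ≤ R := by
    have := hRK hxK
    simpa [Complex.dist_eq] using this
  -- apply the key estimate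
  have ht2 : ‖t‖ ≤ 1 / 2 :=
    le_of_lt (hatτ.trans_le ((min_le_left _ _).trans (min_le_left _ _)))
  have htR : ‖t‖ * R ≤ 1 := by
    have h1R : ‖t‖ ≤ 1 / R :=
      le_of_lt (hatτ.trans_le ((min_le_left _ _).trans (min_le_right _ _)))
    calc ‖t‖ * R ≤ (1 / R) * R :=
          mul_le_mul_of_nonneg_right h1R (by linarith)
      _ = 1 := by field_simp
  have hkey := stmt_18_key R hR1 x t ht0 hxR ht2 htR
  set g : ℂ := (1 - Complex.exp t)⁻¹ * (1 - Complex.exp (x * t)) with hg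
  have hdistgx : dist g x < δ := by
    rw [Complex.dist_eq]
    calc ‖g - x‖ ≤ C * ‖t‖ := hkey
      _ < C * τ := by exact (mul_lt_mul_iff_right₀ hCpos).mpr hatτ
      _ ≤ C * (δ / (C + 1)) := by
          apply mul_le_mul_of_nonneg_left (min_le_right _ _) (le_of_lt hCpos)
      _ < δ := by
          rw [mul_comm, div_mul_eq_mul_div, div_lt_iff₀ (by linarith)]
          nlinarith
  -- the evaluated polynomial equals p.eval g
  have heval : (p.comp (Polynomial.C ((1 : ℂ) - (q : ℂ))⁻¹ * (1 - Polynomial.X))).eval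
      (Complex.exp (x * (Real.log q : ℂ))) = p.eval g := by
    rw [eval_comp]
    congr 1
    simp [hg, hqexp, htdef]
  rw [heval]
  have hgball : g ∈ Metric.closedBall (0 : ℂ) (R + 1) := by
    rw [Metric.mem_closedBall, Complex.dist_eq, sub_zero]
    calc ‖g‖ = ‖x + (g - x)‖ := by ring_nf
      _ ≤ ‖x‖ + ‖g - x‖ := norm_add_le _ _
      _ ≤ R + δ := by
          refine add_le_add hxR ?_
          rw [Complex.dist_eq] at hdistgx
          linarith
      _ ≤ R + 1 := by linarith
  have hxball : x ∈ Metric.closedBall (0 : ℂ) (R + 1) := by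
    rw [Metric.mem_closedBall, Complex.dist_eq, sub_zero]
    linarith
  have := hδ x hxball g hgball (by rw [dist_comm]; exact hdistgx.trans_le (min_le_left _ _))
  exact this
end
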